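/- arXiv:1904.00127 — 4 statements merged into one kernel-verified Lean document; each statement's English description precedes it below -/
import Mathlib

section
/- Let α > 0, δ > 0 and ξ ∈ ℝ². Let U(x) = log( 2α²δ^α / (δ^α + |x − ξ|^α)² ) be the standard singular bubble and define Z₀(x) = (δ^α − |x − ξ|^α)/(δ^α + |x − ξ|^α). Then at every point x ∈ ℝ² with x ≠ ξ, one has −ΔZ₀(x) = |x − ξ|^{α−2} · exp(U(x)) · Z₀(x), where Δ denotes the Laplacian (the sum of the two second partial derivatives). -/
open MeasureTheory Real

noncomputable section

/-- The plane `ℝ²`. -/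
abbrev Plane := EuclideanSpace ℝ (Fin 2)

/-- The Laplacian of `f : ℝ² → ℝ`: the sum of the two second partial derivatives. -/
noncomputable def lap (f : Plane → ℝ) (x : Plane) : ℝ :=
  ∑ i : Fin 2,
    fderiv ℝ (fun y => fderiv ℝ f y (EuclideanSpace.single i 1)) x (EuclideanSpace.single i 1)

/-- The standard singular bubble `U(x) = log(2α²δ^α / (δ^α + |x-ξ|^α)²)`. -/
noncomputable def bubble (α δ : ℝ) (ξ : Plane) (x : Plane) : ℝ :=
  Real.log (2 * α ^ 2 * δ ^ α / (δ ^ α + ‖x - ξ‖ ^ α) ^ 2)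

/-- `Y₀(y) = (1 - |y|^α)/(1 + |y|^α)`. -/
noncomputable def Ynull (α : ℝ) (y : Plane) : ℝ :=
  (1 - ‖y‖ ^ α) / (1 + ‖y‖ ^ α)

noncomputable def gder (c p t : ℝ) : ℝ := -(2 * c * p * t ^ (p - 1)) / (c + t ^ p) ^ 2

noncomputable def gder2 (c p t : ℝ) : ℝ :=
  (-(2 * c * p * ((p - 1) * t ^ (p - 2))) * (c + t ^ p) ^ 2 -
      -(2 * c * p * t ^ (p - 1)) * (2 * (c + t ^ p) * (p * t ^ (p - 1)))) /
    ((c + t ^ p) ^ 2) ^ 2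

lemma hasDerivAt_gfun (c p s : ℝ) (hc : 0 < c) (hs : 0 < s) :
    HasDerivAt (fun t : ℝ => (c - t ^ p) / (c + t ^ p)) (gder c p s) s := by
  have ht : HasDerivAt (fun t : ℝ => t ^ p) (p * s ^ (p - 1)) s :=
    Real.hasDerivAt_rpow_const (Or.inl hs.ne')
  have hden : c + s ^ p ≠ 0 := by positivity
  have h := ((hasDerivAt_const s c).sub ht).fun_div ((hasDerivAt_const s c).add ht) hden
  refine h.congr_deriv ?_
  simp only [Pi.add_apply, Pi.sub_apply]
  unfold gder
  field_simp
  ring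

lemma hasDerivAt_gder (c p s : ℝ) (hc : 0 < c) (hs : 0 < s) :
    HasDerivAt (fun t : ℝ => gder c p t) (gder2 c p s) s := by
  have ht : HasDerivAt (fun t : ℝ => t ^ p) (p * s ^ (p - 1)) s :=
    Real.hasDerivAt_rpow_const (Or.inl hs.ne')
  have ht1 : HasDerivAt (fun t : ℝ => t ^ (p - 1)) ((p - 1) * s ^ (p - 1 - 1)) s :=
    Real.hasDerivAt_rpow_const (Or.inl hs.ne')
  have hden : (c + s ^ p) ^ 2 ≠ 0 := by positivity
  have hnum : HasDerivAt (fun t : ℝ => -(2 * c * p * t ^ (p - 1)))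
      (-(2 * c * p * ((p - 1) * s ^ (p - 2)))) s := by
    have := (ht1.const_mul (2 * c * p)).fun_neg
    refine this.congr_deriv ?_
    ring_nf
  have hd : HasDerivAt (fun t : ℝ => (c + t ^ p) ^ 2)
      (2 * (c + s ^ p) * (p * s ^ (p - 1))) s := by
    have := ((hasDerivAt_const s c).add ht).fun_pow 2
    refine this.congr_deriv ?_
    simp only [Pi.add_apply]
    push_cast
    ring
  have h := hnum.fun_div hd hden
  exact h.congr_deriv rfl

theorem Znull_solves_linearized (α δ : ℝ) (hα : 0 < α) (hδ : 0 < δ) (ξ : Plane)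
    (x : Plane) (hx : x ≠ ξ) :
    -lap (fun x => (δ ^ α - ‖x - ξ‖ ^ α) / (δ ^ α + ‖x - ξ‖ ^ α)) x =
      ‖x - ξ‖ ^ (α - 2) * Real.exp (bubble α δ ξ x) *
        ((δ ^ α - ‖x - ξ‖ ^ α) / (δ ^ α + ‖x - ξ‖ ^ α)) := by
  classical
  set c : ℝ := δ ^ α with hc_def
  set p : ℝ := α / 2 with hp_def
  have hc : 0 < c := Real.rpow_pos_of_pos hδ α
  have hp : 0 < p := by positivity
  -- rpow via squared norm
  have key : ∀ v : Plane, ‖v‖ ^ α = (‖v‖ ^ 2) ^ p := by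
    intro v
    rw [← Real.rpow_natCast ‖v‖ 2, ← Real.rpow_mul (norm_nonneg v)]
    congr 1
    push_cast
    rw [hp_def]; ring
  set Nf : Plane → ℝ := fun y => ∑ i : Fin 2, (y i - ξ i) * (y i - ξ i) with hNf_def
  have hN : ∀ y : Plane, ‖y - ξ‖ ^ 2 = Nf y := by
    intro y
    rw [PiLp.norm_sq_eq_of_L2]
    refine Finset.sum_congr rfl fun i _ => ?_
    simp [Real.norm_eq_abs, sq_abs, sq]
  have hNpos : ∀ y : Plane, y ≠ ξ → 0 < Nf y := by
    intro y hy
    rw [← hN]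
    have : 0 < ‖y - ξ‖ := norm_pos_iff.mpr (sub_ne_zero.mpr hy)
    positivity
  set D : Plane → (Plane →L[ℝ] ℝ) :=
    fun y => ∑ i : Fin 2, (2 * (y i - ξ i)) • (EuclideanSpace.proj i : Plane →L[ℝ] ℝ)
    with hD_def
  have hD : ∀ y : Plane, HasFDerivAt Nf (D y) y := by
    intro y
    refine HasFDerivAt.fun_sum fun i _ => ?_
    have h1 : HasFDerivAt (fun z : Plane => z i - ξ i)
        (EuclideanSpace.proj i : Plane →L[ℝ] ℝ) y :=
      (EuclideanSpace.proj (𝕜 := ℝ) i).hasFDerivAt.sub_const _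
    have := h1.fun_mul h1
    refine this.congr_fderiv ?_
    rw [two_mul, add_smul]
  have hDe : ∀ (y : Plane) (i : Fin 2),
      D y (EuclideanSpace.single i 1) = 2 * (y i - ξ i) := by
    intro y i
    rw [hD_def]
    simp only [ContinuousLinearMap.sum_apply, ContinuousLinearMap.smul_apply]
    rw [Fin.sum_univ_two]
    fin_cases i <;>
      simp [EuclideanSpace.single_apply]
  set Z : Plane → ℝ := (fun t : ℝ => (c - t ^ p) / (c + t ^ p)) ∘ Nf with hZ_def
  have hZeq : (fun y : Plane => (δ ^ α - ‖y - ξ‖ ^ α) / (δ ^ α + ‖y - ξ‖ ^ α)) = Z := by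
    funext y
    rw [hZ_def]
    simp only [Function.comp_apply]
    rw [key (y - ξ), hN]
  have hZ' : ∀ y : Plane, y ≠ ξ → HasFDerivAt Z (gder c p (Nf y) • D y) y := by
    intro y hy
    exact (hasDerivAt_gfun c p (Nf y) hc (hNpos y hy)).comp_hasFDerivAt y (hD y)
  have hev : ∀ i : Fin 2,
      (fun y => fderiv ℝ Z y (EuclideanSpace.single i 1)) =ᶠ[nhds x]
        fun y => gder c p (Nf y) * (2 * (y i - ξ i)) := by
    intro i
    filter_upwards [eventually_ne_nhds hx] with y hy
    rw [(hZ' y hy).fderiv]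
    rw [ContinuousLinearMap.smul_apply, hDe y i]
    rfl
  have hg2 : HasFDerivAt (fun y : Plane => gder c p (Nf y)) (gder2 c p (Nf x) • D x) x :=
    (hasDerivAt_gder c p (Nf x) hc (hNpos x hx)).comp_hasFDerivAt x (hD x)
  have hlin : ∀ i : Fin 2, HasFDerivAt (fun y : Plane => 2 * (y i - ξ i))
      ((2 : ℝ) • (EuclideanSpace.proj i : Plane →L[ℝ] ℝ)) x := by
    intro i
    exact ((EuclideanSpace.proj (𝕜 := ℝ) i).hasFDerivAt.sub_const _).const_mul 2
  have hsecond : ∀ i : Fin 2,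
      fderiv ℝ (fun y => fderiv ℝ Z y (EuclideanSpace.single i 1)) x
          (EuclideanSpace.single i 1)
        = gder c p (Nf x) * 2 +
          2 * (x i - ξ i) * (gder2 c p (Nf x) * (2 * (x i - ξ i))) := by
    intro i
    rw [(hev i).fderiv_eq, (hg2.fun_mul (hlin i)).fderiv]
    simp only [ContinuousLinearMap.add_apply, ContinuousLinearMap.smul_apply, hDe,
      smul_eq_mul]
    have : (EuclideanSpace.proj (𝕜 := ℝ) i : Plane →L[ℝ] ℝ) (EuclideanSpace.single i 1) = 1 := by
      simp [EuclideanSpace.single_apply]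
    rw [this]
    ring
  have hNx : Nf x = (x 0 - ξ 0) * (x 0 - ξ 0) + (x 1 - ξ 1) * (x 1 - ξ 1) := by
    rw [hNf_def]; exact Fin.sum_univ_two _
  have hlap : lap Z x = 4 * gder c p (Nf x) + 4 * Nf x * gder2 c p (Nf x) := by
    unfold lap
    rw [Fin.sum_univ_two, hsecond 0, hsecond 1, hNx]
    ring
  rw [hZeq, hlap]
  -- final algebra
  have hs : 0 < Nf x := hNpos x hx
  set s : ℝ := Nf x with hs_def
  have hr : 0 < ‖x - ξ‖ := norm_pos_iff.mpr (sub_ne_zero.mpr hx)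
  have hrα : ‖x - ξ‖ ^ α = s ^ p := by rw [key (x - ξ), hN]
  have hrα2 : ‖x - ξ‖ ^ (α - 2) = s ^ (p - 1) := by
    rw [hs_def, ← hN x, ← Real.rpow_natCast ‖x - ξ‖ 2, ← Real.rpow_mul (norm_nonneg _)]
    congr 1
    push_cast
    rw [hp_def]; ring
  have hexp : Real.exp (bubble α δ ξ x) = 2 * α ^ 2 * c / (c + s ^ p) ^ 2 := by
    unfold bubble
    rw [← hrα, ← hc_def]
    rw [Real.exp_log]
    have h1 : (0 : ℝ) < ‖x - ξ‖ ^ α := Real.rpow_pos_of_pos hr α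
    have h2 : (0 : ℝ) < α ^ 2 := by positivity
    positivity
  rw [hexp, hrα, hrα2]
  have hα2p : α = 2 * p := by rw [hp_def]; ring
  rw [hα2p]
  unfold gder gder2
  have e1 : s * s ^ (p - 2) = s ^ (p - 1) := by
    have h := Real.rpow_add hs 1 (p - 2)
    rw [Real.rpow_one] at h
    rw [← h]
    congr 1
    ring
  have e2 : s * s ^ (p - 1) = s ^ p := by
    have h := Real.rpow_add hs 1 (p - 1)
    rw [Real.rpow_one] at h
    rw [← h]
    congr 1
    ring
  have hden : (0 : ℝ) < c + s ^ p := by positivity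
  rw [← e2, ← e1] at hden ⊢
  field_simp
  ring
end
end

section
/- Let α > 0, δ > 0 and ξ ∈ ℝ². Let U(x) = log( 2α²δ^α / (δ^α + |x − ξ|^α)² ) be the standard singular bubble and define η₀(x) = −2δ^α/(δ^α + |x − ξ|^α). Then at every point x ∈ ℝ² with x ≠ ξ, one has Δη₀(x) + |x − ξ|^{α−2} · exp(U(x)) · η₀(x) = −|x − ξ|^{α−2} · exp(U(x)), where Δ denotes the Laplacian (the sum of the two second partial derivatives). -/
open MeasureTheory Real

noncomputable section

/-! ### Auxiliary machinery -/

/-- Squared distance to `ξ`, written coordinatewise. -/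
noncomputable def Tfun (ξ y : Plane) : ℝ := ∑ j : Fin 2, (y j - ξ j) * (y j - ξ j)

/-- The derivative of `Tfun ξ` at `y`. -/
noncomputable def Lmap (ξ y : Plane) : Plane →L[ℝ] ℝ :=
  ∑ j : Fin 2, ((y j - ξ j) • (EuclideanSpace.proj j : Plane →L[ℝ] ℝ)
    + (y j - ξ j) • (EuclideanSpace.proj j : Plane →L[ℝ] ℝ))

lemma hasFDerivAt_Tfun (ξ y : Plane) : HasFDerivAt (Tfun ξ) (Lmap ξ y) y := by
  apply HasFDerivAt.fun_sum
  intro j _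
  have h := ((EuclideanSpace.proj j : Plane →L[ℝ] ℝ).hasFDerivAt (x := y)).sub_const (ξ j)
  exact h.mul h

lemma Lmap_apply (ξ y : Plane) (i : Fin 2) :
    Lmap ξ y (EuclideanSpace.single i 1) = 2 * (y i - ξ i) := by
  unfold Lmap
  fin_cases i <;>
    simp [ContinuousLinearMap.sum_apply, EuclideanSpace.single_apply] <;> ring

lemma Tfun_eq_norm (ξ y : Plane) : Tfun ξ y = ‖y - ξ‖ ^ (2 : ℕ) := by
  rw [EuclideanSpace.norm_eq, Real.sq_sqrt (by positivity)]
  unfold Tfun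
  refine Finset.sum_congr rfl fun j _ => ?_
  simp [Real.norm_eq_abs, sq_abs, sq]

lemma Tfun_pos (ξ y : Plane) (h : y ≠ ξ) : 0 < Tfun ξ y := by
  rw [Tfun_eq_norm]
  have h0 : y - ξ ≠ 0 := sub_ne_zero.mpr h
  exact pow_pos (norm_pos_iff.mpr h0) 2

lemma sq_rpow_half (s α : ℝ) (hs : 0 ≤ s) : (s ^ (2 : ℕ)) ^ (α / 2) = s ^ α := by
  rw [← Real.rpow_natCast s 2, ← Real.rpow_mul hs]
  congr 1
  push_cast
  ring

lemma hasDerivAt_g (d β t : ℝ) (hd : 0 < d) (ht : 0 < t) :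
    HasDerivAt (fun s : ℝ => -2 * d / (d + s ^ β))
      ((0 * (d + t ^ β) - -2 * d * (β * t ^ (β - 1))) / (d + t ^ β) ^ 2) t := by
  have h1 : HasDerivAt (fun s : ℝ => s ^ β) (β * t ^ (β - 1)) t :=
    Real.hasDerivAt_rpow_const (Or.inl ht.ne')
  have hne : d + t ^ β ≠ 0 := by positivity
  exact (hasDerivAt_const t (-2 * d)).div (h1.const_add d) hne

lemma hasDerivAt_g1 (d β t : ℝ) (hd : 0 < d) (ht : 0 < t) :
    HasDerivAt (fun s : ℝ => 2 * d * β * s ^ (β - 1) / (d + s ^ β) ^ 2)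
      ((2 * d * β * ((β - 1) * t ^ (β - 1 - 1)) * (d + t ^ β) ^ 2 -
          2 * d * β * t ^ (β - 1) * ((2 : ℕ) * (d + t ^ β) ^ (2 - 1) * (β * t ^ (β - 1)))) /
        ((d + t ^ β) ^ 2) ^ 2) t := by
  have h1 : HasDerivAt (fun s : ℝ => s ^ (β - 1)) ((β - 1) * t ^ (β - 1 - 1)) t :=
    Real.hasDerivAt_rpow_const (Or.inl ht.ne')
  have h2 : HasDerivAt (fun s : ℝ => s ^ β) (β * t ^ (β - 1)) t :=
    Real.hasDerivAt_rpow_const (Or.inl ht.ne')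
  have hne : (d + t ^ β) ^ 2 ≠ 0 := by positivity
  exact (h1.const_mul _).div ((h2.const_add d).pow 2) hne

lemma fderiv_eta (ξ : Plane) (d β : ℝ) (hd : 0 < d) (y : Plane) (hy : y ≠ ξ) (i : Fin 2) :
    fderiv ℝ (fun z => -2 * d / (d + Tfun ξ z ^ β)) y (EuclideanSpace.single i 1)
      = 2 * d * β * Tfun ξ y ^ (β - 1) / (d + Tfun ξ y ^ β) ^ 2 * (2 * (y i - ξ i)) := by
  have ht := Tfun_pos ξ y hy
  have hF : HasFDerivAt (fun z => -2 * d / (d + Tfun ξ z ^ β))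
      (((0 * (d + Tfun ξ y ^ β) - -2 * d * (β * Tfun ξ y ^ (β - 1))) /
        (d + Tfun ξ y ^ β) ^ 2) • Lmap ξ y) y :=
    (hasDerivAt_g d β (Tfun ξ y) hd ht).comp_hasFDerivAt y (hasFDerivAt_Tfun ξ y)
  rw [hF.fderiv, ContinuousLinearMap.smul_apply, Lmap_apply, smul_eq_mul]
  ring

lemma snd_deriv (ξ : Plane) (d β : ℝ) (hd : 0 < d) (x : Plane) (hx : x ≠ ξ) (i : Fin 2) :
    fderiv ℝ (fun y => fderiv ℝ (fun z => -2 * d / (d + Tfun ξ z ^ β)) y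
        (EuclideanSpace.single i 1)) x (EuclideanSpace.single i 1)
      = 2 * (2 * d * β * Tfun ξ x ^ (β - 1) / (d + Tfun ξ x ^ β) ^ 2)
        + 4 * (x i - ξ i) * (x i - ξ i) *
          ((2 * d * β * ((β - 1) * Tfun ξ x ^ (β - 1 - 1)) * (d + Tfun ξ x ^ β) ^ 2 -
              2 * d * β * Tfun ξ x ^ (β - 1) *
                (2 * (d + Tfun ξ x ^ β) * (β * Tfun ξ x ^ (β - 1)))) /
            ((d + Tfun ξ x ^ β) ^ 2) ^ 2) := by
  have ht := Tfun_pos ξ x hx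
  have hev : (fun y => fderiv ℝ (fun z => -2 * d / (d + Tfun ξ z ^ β)) y
      (EuclideanSpace.single i 1)) =ᶠ[nhds x]
      (fun y => 2 * d * β * Tfun ξ y ^ (β - 1) / (d + Tfun ξ y ^ β) ^ 2 * (2 * (y i - ξ i))) := by
    filter_upwards [isOpen_ne.mem_nhds hx] with y hy using fderiv_eta ξ d β hd y hy i
  rw [hev.fderiv_eq]
  have hc : HasFDerivAt (fun y => 2 * d * β * Tfun ξ y ^ (β - 1) / (d + Tfun ξ y ^ β) ^ 2)
      (((2 * d * β * ((β - 1) * Tfun ξ x ^ (β - 1 - 1)) * (d + Tfun ξ x ^ β) ^ 2 -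
          2 * d * β * Tfun ξ x ^ (β - 1) *
            ((2 : ℕ) * (d + Tfun ξ x ^ β) ^ (2 - 1) * (β * Tfun ξ x ^ (β - 1)))) /
        ((d + Tfun ξ x ^ β) ^ 2) ^ 2) • Lmap ξ x) x :=
    (hasDerivAt_g1 d β (Tfun ξ x) hd ht).comp_hasFDerivAt x (hasFDerivAt_Tfun ξ x)
  have hm : HasFDerivAt (fun y : Plane => 2 * (y i - ξ i))
      ((2 : ℝ) • (EuclideanSpace.proj i : Plane →L[ℝ] ℝ)) x :=
    (((EuclideanSpace.proj i : Plane →L[ℝ] ℝ).hasFDerivAt (x := x)).sub_const (ξ i)).const_mul 2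
  rw [(hc.fun_mul hm).fderiv]
  simp only [ContinuousLinearMap.add_apply, ContinuousLinearMap.smul_apply, Lmap_apply,
    smul_eq_mul, PiLp.proj_apply, EuclideanSpace.single_apply, if_pos rfl]
  push_cast
  ring

set_option maxHeartbeats 1000000 in
theorem eta0_equation (α δ : ℝ) (hα : 0 < α) (hδ : 0 < δ) (ξ : Plane)
    (x : Plane) (hx : x ≠ ξ) :
    lap (fun x => -2 * δ ^ α / (δ ^ α + ‖x - ξ‖ ^ α)) x +
        ‖x - ξ‖ ^ (α - 2) * Real.exp (bubble α δ ξ x) *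
          (-2 * δ ^ α / (δ ^ α + ‖x - ξ‖ ^ α)) =
      -(‖x - ξ‖ ^ (α - 2) * Real.exp (bubble α δ ξ x)) := by
  have hd : (0:ℝ) < δ ^ α := Real.rpow_pos_of_pos hδ α
  have hxne : x - ξ ≠ 0 := sub_ne_zero.mpr hx
  have hr : (0:ℝ) < ‖x - ξ‖ := norm_pos_iff.mpr hxne
  have ht := Tfun_pos ξ x hx
  have hfun : (fun x : Plane => -2 * δ ^ α / (δ ^ α + ‖x - ξ‖ ^ α))
      = (fun y => -2 * δ ^ α / (δ ^ α + Tfun ξ y ^ (α / 2))) := by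
    funext y
    rw [Tfun_eq_norm, sq_rpow_half _ _ (norm_nonneg _)]
  rw [hfun]
  simp only [lap]
  rw [Fin.sum_univ_two, snd_deriv ξ (δ ^ α) (α / 2) hd x hx 0,
    snd_deriv ξ (δ ^ α) (α / 2) hd x hx 1]
  have hbub : Real.exp (bubble α δ ξ x) = 2 * α ^ 2 * δ ^ α / (δ ^ α + ‖x - ξ‖ ^ α) ^ 2 := by
    rw [bubble, Real.exp_log]
    apply div_pos
    · have : (0:ℝ) < α ^ 2 := pow_pos hα 2
      positivity
    · have : (0:ℝ) ≤ ‖x - ξ‖ ^ α := Real.rpow_nonneg (norm_nonneg _) α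
      positivity
  rw [hbub]
  have hP : ‖x - ξ‖ ^ α = Tfun ξ x ^ (α / 2) := by
    rw [Tfun_eq_norm, sq_rpow_half _ _ (norm_nonneg _)]
  have hA : ‖x - ξ‖ ^ (α - 2) = Tfun ξ x ^ (α / 2 - 1) := by
    rw [Tfun_eq_norm, ← Real.rpow_natCast (‖x - ξ‖) 2, ← Real.rpow_mul (norm_nonneg _)]
    congr 1
    push_cast
    ring
  rw [hP, hA]
  have hA' : Tfun ξ x ^ (α / 2 - 1) = Tfun ξ x ^ (α / 2) / Tfun ξ x := by
    rw [Real.rpow_sub ht, Real.rpow_one]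
  have hC' : Tfun ξ x ^ (α / 2 - 1 - 1) = Tfun ξ x ^ (α / 2) / Tfun ξ x / Tfun ξ x := by
    rw [Real.rpow_sub ht, Real.rpow_sub ht, Real.rpow_one]
  rw [hA', hC']
  have hP0 : (0:ℝ) < Tfun ξ x ^ (α / 2) := Real.rpow_pos_of_pos ht _
  have htdef : Tfun ξ x = (x 0 - ξ 0) * (x 0 - ξ 0) + (x 1 - ξ 1) * (x 1 - ξ 1) := by
    simp [Tfun, Fin.sum_univ_two]
  have htne : (x 0 - ξ 0) * (x 0 - ξ 0) + (x 1 - ξ 1) * (x 1 - ξ 1) ≠ 0 := htdef ▸ ht.ne'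
  generalize hPv : Tfun ξ x ^ (α / 2) = P
  have hP0' : (0:ℝ) < P := hPv ▸ hP0
  have hQ : δ ^ α + P ≠ 0 := by positivity
  rw [htdef]
  generalize x 0 - ξ 0 = a at htne ⊢
  generalize x 1 - ξ 1 = b at htne ⊢
  have htne' : a ^ 2 + b ^ 2 ≠ 0 := by rw [sq, sq]; exact htne
  field_simp
  ring
end
end

section
/- Let α > 0 and Y₀(y) = (1 − |y|^α)/(1 + |y|^α). Then the function y ↦ (2α²|y|^{α−2}/(1 + |y|^α)²) · Y₀(y)² is integrable on ℝ² and ∫_{ℝ²} (2α²|y|^{α−2}/(1 + |y|^α)²) · Y₀(y)² dy = 4πα/3. -/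
open MeasureTheory Real

noncomputable section

open Set Metric Filter Topology in
private lemma oneD_deriv (α : ℝ) (r : ℝ) (hr : r ∈ Ioi (0:ℝ)) :
    HasDerivAt (fun r : ℝ => 2*α * (-(1+r^α)⁻¹ + 2*((1+r^α)^2)⁻¹ - 4/3*((1+r^α)^3)⁻¹))
      (r * (2 * α ^ 2 * r ^ (α - 2) / (1 + r ^ α) ^ 2 * ((1 - r ^ α) / (1 + r ^ α)) ^ 2)) r := by
  have hr0 : (0:ℝ) < r := hr
  have ht : (0:ℝ) < r ^ α := rpow_pos_of_pos hr0 α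
  have hden : (1 : ℝ) + r ^ α ≠ 0 := by positivity
  have hb : HasDerivAt (fun r : ℝ => 1 + r ^ α) (α * r ^ (α - 1)) r := by
    simpa using (Real.hasDerivAt_rpow_const (x := r) (p := α) (Or.inl hr0.ne')).const_add 1
  have h1 : HasDerivAt (fun r : ℝ => (1 + r ^ α)⁻¹)
      (-(α * r ^ (α - 1)) / (1 + r ^ α) ^ 2) r := hb.inv hden
  have h2 : HasDerivAt (fun r : ℝ => ((1 + r ^ α) ^ 2)⁻¹)
      (-((2:ℕ) * (1 + r ^ α) ^ 1 * (α * r ^ (α - 1))) / ((1 + r ^ α) ^ 2) ^ 2) r :=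
    (hb.pow 2).inv (pow_ne_zero _ hden)
  have h3 : HasDerivAt (fun r : ℝ => ((1 + r ^ α) ^ 3)⁻¹)
      (-((3:ℕ) * (1 + r ^ α) ^ 2 * (α * r ^ (α - 1))) / ((1 + r ^ α) ^ 3) ^ 2) r :=
    (hb.pow 3).inv (pow_ne_zero _ hden)
  have h := (((h1.neg.add (h2.const_mul 2)).sub (h3.const_mul (4/3))).const_mul (2*α))
  convert h using 1
  case e'_4 => rfl
  case e'_5 => rfl
  case e'_8 => rfl
  have e1 : r ^ (α - 1) = r ^ α / r := by
    rw [Real.rpow_sub hr0, Real.rpow_one]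
  have e2 : r ^ (α - 2) = r ^ α / r ^ (2:ℕ) := by
    rw [show (α - 2) = α - (2:ℕ) by norm_num, Real.rpow_sub hr0, Real.rpow_natCast]
  rw [e1, e2]
  field_simp
  ring

open Set Metric Filter Topology in
private lemma oneD (α : ℝ) (hα : 0 < α) :
    IntegrableOn (fun r : ℝ =>
        r * (2 * α ^ 2 * r ^ (α - 2) / (1 + r ^ α) ^ 2 * ((1 - r ^ α) / (1 + r ^ α)) ^ 2))
      (Ioi 0) volume ∧
    ∫ r in Ioi (0:ℝ),
        r * (2 * α ^ 2 * r ^ (α - 2) / (1 + r ^ α) ^ 2 * ((1 - r ^ α) / (1 + r ^ α)) ^ 2)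
      = 2 * α / 3 := by
  set Φ : ℝ → ℝ := fun r => 2*α * (-(1+r^α)⁻¹ + 2*((1+r^α)^2)⁻¹ - 4/3*((1+r^α)^3)⁻¹) with hΦ
  have hderiv : ∀ r ∈ Ioi (0:ℝ), HasDerivAt Φ
      (r * (2 * α ^ 2 * r ^ (α - 2) / (1 + r ^ α) ^ 2 * ((1 - r ^ α) / (1 + r ^ α)) ^ 2)) r :=
    fun r hr => oneD_deriv α r hr
  have hpos : ∀ r ∈ Ioi (0:ℝ),
      0 ≤ r * (2 * α ^ 2 * r ^ (α - 2) / (1 + r ^ α) ^ 2 * ((1 - r ^ α) / (1 + r ^ α)) ^ 2) := by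
    intro r hr
    have hr0 : (0:ℝ) < r := hr
    have h1 : (0:ℝ) ≤ r ^ (α - 2) := Real.rpow_nonneg hr0.le _
    have h2 : (0:ℝ) < 1 + r ^ α := by positivity
    positivity
  have hcont : ContinuousWithinAt Φ (Ici 0) 0 := by
    apply ContinuousAt.continuousWithinAt
    have h1 : ContinuousAt (fun r : ℝ => r ^ α) 0 :=
      Real.continuousAt_rpow_const 0 α (Or.inr hα.le)
    have h2 : ContinuousAt (fun t : ℝ => 2*α * (-(1+t)⁻¹ + 2*((1+t)^2)⁻¹ - 4/3*((1+t)^3)⁻¹))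
        ((0:ℝ) ^ α) := by
      rw [Real.zero_rpow hα.ne']
      have hne : (1:ℝ) + 0 ≠ 0 := by norm_num
      fun_prop (disch := norm_num)
    exact ContinuousAt.comp (g := fun t : ℝ => 2*α * (-(1+t)⁻¹ + 2*((1+t)^2)⁻¹ - 4/3*((1+t)^3)⁻¹))
      (f := fun r : ℝ => r ^ α) (x := (0:ℝ)) h2 h1
  have hlim : Tendsto Φ atTop (𝓝 0) := by
    have hb : Tendsto (fun r : ℝ => 1 + r ^ α) atTop atTop :=
      tendsto_atTop_add_const_left _ 1 (tendsto_rpow_atTop hα)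
    have t1 : Tendsto (fun r : ℝ => (1 + r ^ α)⁻¹) atTop (𝓝 0) :=
      tendsto_inv_atTop_zero.comp hb
    have t2 : Tendsto (fun r : ℝ => ((1 + r ^ α) ^ 2)⁻¹) atTop (𝓝 0) :=
      tendsto_inv_atTop_zero.comp ((tendsto_pow_atTop two_ne_zero).comp hb)
    have t3 : Tendsto (fun r : ℝ => ((1 + r ^ α) ^ 3)⁻¹) atTop (𝓝 0) :=
      tendsto_inv_atTop_zero.comp ((tendsto_pow_atTop three_ne_zero).comp hb)
    have := (((t1.neg.add (t2.const_mul 2)).sub (t3.const_mul (4/3))).const_mul (2*α))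
    simpa using this
  have hΦ0 : Φ 0 = -(2 * α / 3) := by
    simp only [hΦ, Real.zero_rpow hα.ne']
    norm_num
    ring
  refine ⟨integrableOn_Ioi_deriv_of_nonneg hcont hderiv hpos hlim, ?_⟩
  rw [integral_Ioi_of_hasDerivAt_of_nonneg hcont hderiv hpos hlim, hΦ0]
  ring

private lemma plane_rank : Module.finrank ℝ Plane = 2 := by
  simp [finrank_euclideanSpace_fin]

open Set Metric Filter Topology in
private lemma plane_integrable_norm (f : ℝ → ℝ)
    (hf : IntegrableOn (fun y : ℝ => y * f y) (Ioi 0) volume) :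
    Integrable (fun x : Plane => f ‖x‖) volume := by
  have h1 : Integrable ((fun y : ℝ => y * f y) ∘ (Subtype.val : Ioi (0:ℝ) → ℝ))
      ((volume : Measure ℝ).comap Subtype.val) := by
    rw [← (MeasurableEmbedding.subtype_coe measurableSet_Ioi).integrable_map_iff,
      map_comap_subtype_coe measurableSet_Ioi]
    exact hf
  have h2 : Integrable (fun x : Ioi (0:ℝ) => f x) (Measure.volumeIoiPow 1) := by
    rw [Measure.volumeIoiPow]
    have hiff := integrable_withDensity_iff_integrable_smul' (E := ℝ)
      (μ := (volume : Measure ℝ).comap (Subtype.val : Ioi (0:ℝ) → ℝ))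
      (f := fun r : Ioi (0:ℝ) => ENNReal.ofReal ((r:ℝ) ^ 1))
      (g := fun r : Ioi (0:ℝ) => f r) ((measurable_subtype_coe.pow_const 1).ennreal_ofReal)
      (Eventually.of_forall fun x => ENNReal.ofReal_lt_top)
    have hsm : Integrable (fun x : Ioi (0:ℝ) => (ENNReal.ofReal ((x:ℝ)^1)).toReal • f x)
        ((volume : Measure ℝ).comap (Subtype.val : Ioi (0:ℝ) → ℝ)) := by
      refine h1.congr (Eventually.of_forall fun x => ?_)
      have hx : (0:ℝ) < x := x.2
      show (x:ℝ) * f x = (ENNReal.ofReal ((x:ℝ)^1)).toReal • f x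
      rw [pow_one, ENNReal.toReal_ofReal hx.le, smul_eq_mul]
    exact hiff.mpr hsm
  have h3 : Integrable (fun p : sphere (0:Plane) 1 × Ioi (0:ℝ) => f p.2)
      ((volume : Measure Plane).toSphere.prod (Measure.volumeIoiPow 1)) := by
    have := (integrable_const (c := (1:ℝ)) (μ := (volume : Measure Plane).toSphere)).mul_prod h2
    simpa using this
  have h4 := ((Measure.measurePreserving_homeomorphUnitSphereProd
      (volume : Measure Plane)).integrable_comp_emb
      (Homeomorph.measurableEmbedding _)).mpr (by rw [plane_rank]; exact h3)
  have h5 : Integrable (fun x : ({0}ᶜ : Set Plane) => f ‖(x : Plane)‖)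
      ((volume : Measure Plane).comap Subtype.val) := by
    refine h4.congr (Eventually.of_forall fun x => ?_)
    show f (‖(x:Plane)‖ / 1) = f ‖(x:Plane)‖
    rw [div_one]
  have h6 : IntegrableOn (fun x : Plane => f ‖x‖) {0}ᶜ volume := by
    rw [IntegrableOn, ← map_comap_subtype_coe (measurableSet_singleton (0:Plane)).compl,
      (MeasurableEmbedding.subtype_coe (measurableSet_singleton (0:Plane)).compl).integrable_map_iff]
    exact h5
  rw [show (volume : Measure Plane) = volume.restrict ({(0:Plane)}ᶜ) from
    (restrict_compl_singleton (0:Plane)).symm]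
  exact h6

open Metric in
private lemma plane_ball : ((volume : Measure Plane) (ball 0 1)).toReal = π := by
  rw [EuclideanSpace.volume_ball]
  simp only [Fintype.card_fin]
  rw [show ((2:ℕ):ℝ)/2 + 1 = 2 by norm_num, Real.Gamma_two,
    Real.sq_sqrt pi_nonneg]
  simp [ENNReal.toReal_ofReal pi_nonneg]

theorem integral_kernel_Ynull_sq (α : ℝ) (hα : 0 < α) :
    Integrable (fun y : Plane =>
        (2 * α ^ 2 * ‖y‖ ^ (α - 2) / (1 + ‖y‖ ^ α) ^ 2) * Ynull α y ^ 2) volume ∧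
      ∫ y : Plane, (2 * α ^ 2 * ‖y‖ ^ (α - 2) / (1 + ‖y‖ ^ α) ^ 2) * Ynull α y ^ 2 =
        4 * π * α / 3 := by
  set F : ℝ → ℝ :=
    fun r => 2 * α ^ 2 * r ^ (α - 2) / (1 + r ^ α) ^ 2 * ((1 - r ^ α) / (1 + r ^ α)) ^ 2 with hF
  have hfun : (fun y : Plane =>
      (2 * α ^ 2 * ‖y‖ ^ (α - 2) / (1 + ‖y‖ ^ α) ^ 2) * Ynull α y ^ 2) = fun y => F ‖y‖ := by
    funext y
    simp only [hF, Ynull]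
  have h1 := oneD α hα
  refine ⟨hfun ▸ plane_integrable_norm F h1.1, ?_⟩
  rw [show (fun y : Plane =>
      (2 * α ^ 2 * ‖y‖ ^ (α - 2) / (1 + ‖y‖ ^ α) ^ 2) * Ynull α y ^ 2) = fun y => F ‖y‖ from hfun]
  rw [integral_fun_norm_addHaar (volume : Measure Plane) F, plane_rank, measureReal_def, plane_ball]
  have : ∫ y in Set.Ioi (0:ℝ), y ^ (2 - 1) • F y = 2 * α / 3 := by
    rw [← h1.2]
    refine setIntegral_congr_fun measurableSet_Ioi fun y _ => ?_
    simp [smul_eq_mul]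
    exact Or.inl rfl
  rw [this]
  simp only [nsmul_eq_mul, smul_eq_mul, Nat.cast_ofNat]
  ring
end
end

section
/- Let α > 0 and Y₀(y) = (1 − |y|^α)/(1 + |y|^α). Then the function y ↦ (2α²|y|^{α−2}/(1 + |y|^α)²) · Y₀(y) is integrable on ℝ² and ∫_{ℝ²} (2α²|y|^{α−2}/(1 + |y|^α)²) · Y₀(y) dy = 0. -/
open MeasureTheory Real

noncomputable section

open Set Metric Filter Topology NNReal

/-- Transfer of integrability from the radial profile to the plane. -/
lemma radial_integrable {f : ℝ → ℝ} (hm : Measurable f)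
    (hf : IntegrableOn (fun y : ℝ => y * f y) (Ioi 0) volume) :
    Integrable (fun x : Plane => f ‖x‖) (volume : Measure Plane) := by
  have hdim : Module.finrank ℝ Plane = 2 := finrank_euclideanSpace_fin
  -- integrability w.r.t. the radial density measure
  have h1 : Integrable (fun r : Ioi (0:ℝ) => f r)
      (Measure.volumeIoiPow (Module.finrank ℝ Plane - 1)) := by
    rw [hdim]
    simp only [Measure.volumeIoiPow, ENNReal.ofReal]
    rw [integrable_withDensity_iff_integrable_smul
      ((measurable_subtype_coe.pow_const _).real_toNNReal)]
    have key : IntegrableOn (fun y : ℝ => (y ^ (2 - 1)).toNNReal • f y)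
        (Ioi 0) volume := by
      refine hf.congr_fun (fun y hy => ?_) measurableSet_Ioi
      have hy0 : (0:ℝ) ≤ y := le_of_lt hy
      simp only [NNReal.smul_def, Real.coe_toNNReal _ (pow_nonneg hy0 (2-1)), pow_one,
        smul_eq_mul]
      norm_num
    have := ((MeasurableEmbedding.subtype_coe (measurableSet_Ioi (a := (0:ℝ)))).integrableOn_iff_comap
      (by rw [Subtype.range_coe] : Ioi (0:ℝ) ⊆ range (Subtype.val : Ioi (0:ℝ) → ℝ))).mp key
    have hpre : (Subtype.val : Ioi (0:ℝ) → ℝ) ⁻¹' (Ioi 0) = univ := by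
      ext x; simp [x.2]
    rw [hpre, integrableOn_univ] at this
    exact this
  -- integrability on the product space
  have h2 : Integrable (fun p : sphere (0:Plane) 1 × Ioi (0:ℝ) => f p.2)
      ((volume : Measure Plane).toSphere.prod
        (Measure.volumeIoiPow (Module.finrank ℝ Plane - 1))) := by
    simpa using (integrable_const (1:ℝ)).mul_prod h1
  -- pull back through the polar-coordinate homeomorphism
  have h3 := ((Measure.measurePreserving_homeomorphUnitSphereProd
      (volume : Measure Plane)).integrable_comp_emb
      (Homeomorph.measurableEmbedding _)).mpr h2
  have h4 : Integrable (fun x : ({0}ᶜ : Set Plane) => f ‖(x : Plane)‖)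
      ((volume : Measure Plane).comap Subtype.val) := by
    simpa [Function.comp_def] using h3
  have h5 : IntegrableOn (fun x : Plane => f ‖x‖) ({0}ᶜ) volume := by
    rw [(MeasurableEmbedding.subtype_coe
      (measurableSet_singleton (0:Plane)).compl).integrableOn_iff_comap
      (by rw [Subtype.range_coe] : ({0}ᶜ : Set Plane) ⊆ range Subtype.val)]
    have hpre : (Subtype.val : ({0}ᶜ : Set Plane) → Plane) ⁻¹' ({0}ᶜ) = univ := by
      ext x; simp [x.2]
    rw [hpre, integrableOn_univ]
    exact h4
  rwa [IntegrableOn, restrict_compl_singleton] at h5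

theorem integral_kernel_Ynull (α : ℝ) (hα : 0 < α) :
    Integrable (fun y : Plane =>
        (2 * α ^ 2 * ‖y‖ ^ (α - 2) / (1 + ‖y‖ ^ α) ^ 2) * Ynull α y) volume ∧
      ∫ y : Plane, (2 * α ^ 2 * ‖y‖ ^ (α - 2) / (1 + ‖y‖ ^ α) ^ 2) * Ynull α y = 0 := by
  set f : ℝ → ℝ :=
    fun r => (2 * α ^ 2 * r ^ (α - 2) / (1 + r ^ α) ^ 2) * ((1 - r ^ α) / (1 + r ^ α))
    with hfdef
  have hfun : (fun y : Plane =>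
      (2 * α ^ 2 * ‖y‖ ^ (α - 2) / (1 + ‖y‖ ^ α) ^ 2) * Ynull α y) = fun y => f ‖y‖ := by
    funext y; simp [Ynull, hfdef]
  have hpos : ∀ r : ℝ, 0 < r → 0 < 1 + r ^ α := by
    intro r hr; positivity
  -- derivative of the antiderivative G
  have hderivG : ∀ r ∈ Ioi (0:ℝ),
      HasDerivAt (fun s : ℝ => 2 * α * s ^ α / (1 + s ^ α) ^ 2) (r * f r) r := by
    intro r hr
    have hr' : (0:ℝ) < r := hr
    have ht : HasDerivAt (fun s : ℝ => s ^ α) (α * r ^ (α - 1)) r :=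
      Real.hasDerivAt_rpow_const (Or.inl hr'.ne')
    have h1 : HasDerivAt (fun s : ℝ => 2 * α * s ^ α) (2 * α * (α * r ^ (α - 1))) r :=
      ht.const_mul _
    have h2 : HasDerivAt (fun s : ℝ => (1 + s ^ α) ^ 2)
        (((2:ℕ):ℝ) * (1 + r ^ α) ^ (2 - 1) * (α * r ^ (α - 1))) r := (ht.const_add 1).pow 2
    have hd : HasDerivAt (fun s : ℝ => 2 * α * s ^ α / (1 + s ^ α) ^ 2) _ r :=
      h1.div h2 (pow_ne_zero 2 (hpos r hr').ne')
    convert hd using 1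
    have e1 : r ^ (α - 1) = r ^ α / r := by
      rw [Real.rpow_sub hr', Real.rpow_one]
    have e2 : r ^ (α - 2) = r ^ α / (r * r) := by
      rw [Real.rpow_sub hr']
      congr 1
      rw [show (2:ℝ) = ((2:ℕ):ℝ) by norm_num, Real.rpow_natCast]; ring
    have hne : (1 + r ^ α) ≠ 0 := (hpos r hr').ne'
    rw [hfdef]
    simp only [e1, e2]
    field_simp [e1, e2]
    ring
  -- continuity of G at 0⁺ and limit at ∞
  have hcα : ContinuousAt (fun s : ℝ => s ^ α) 0 :=
    Real.continuousAt_rpow_const 0 α (Or.inr hα.le)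
  have hcontG : ContinuousWithinAt (fun s : ℝ => 2 * α * s ^ α / (1 + s ^ α) ^ 2) (Ici 0) 0 := by
    refine ContinuousAt.continuousWithinAt ?_
    exact (continuousAt_const.mul hcα).div ((continuousAt_const.add hcα).pow 2)
      (by simp [Real.zero_rpow hα.ne'])
  have hatTop : Tendsto (fun s : ℝ => s ^ α) atTop atTop := tendsto_rpow_atTop hα
  have hGtop : Tendsto (fun s : ℝ => 2 * α * s ^ α / (1 + s ^ α) ^ 2) atTop (𝓝 0) := by
    have hinv : Tendsto (fun s : ℝ => 2 * α / s ^ α) atTop (𝓝 0) := by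
      simpa [div_eq_mul_inv] using hatTop.inv_tendsto_atTop.const_mul (2 * α)
    refine squeeze_zero' ?_ ?_ hinv
    · filter_upwards [eventually_gt_atTop (0:ℝ)] with s hs
      have := Real.rpow_pos_of_pos hs α
      positivity
    · filter_upwards [eventually_gt_atTop (0:ℝ)] with s hs
      have hsα : 0 < s ^ α := Real.rpow_pos_of_pos hs α
      rw [div_le_div_iff₀ (by positivity) hsα]
      nlinarith [sq_nonneg (s ^ α), hα.le]
  -- the dominating radial function and its antiderivative
  have hderivH : ∀ r ∈ Ioi (0:ℝ),
      HasDerivAt (fun s : ℝ => -(2 * α) / (1 + s ^ α))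
        (2 * α ^ 2 * r ^ (α - 1) / (1 + r ^ α) ^ 2) r := by
    intro r hr
    have hr' : (0:ℝ) < r := hr
    have ht : HasDerivAt (fun s : ℝ => s ^ α) (α * r ^ (α - 1)) r :=
      Real.hasDerivAt_rpow_const (Or.inl hr'.ne')
    have hd : HasDerivAt (fun s : ℝ => -(2 * α) / (1 + s ^ α)) _ r :=
      (hasDerivAt_const r (-(2 * α))).div (ht.const_add 1) (hpos r hr').ne'
    convert hd using 1
    ring
  have hcontH : ContinuousWithinAt (fun s : ℝ => -(2 * α) / (1 + s ^ α)) (Ici 0) 0 := by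
    refine ContinuousAt.continuousWithinAt ?_
    exact continuousAt_const.div (continuousAt_const.add hcα)
      (by simp [Real.zero_rpow hα.ne'])
  have hHtop : Tendsto (fun s : ℝ => -(2 * α) / (1 + s ^ α)) atTop (𝓝 0) := by
    have : Tendsto (fun s : ℝ => 1 + s ^ α) atTop atTop :=
      tendsto_atTop_add_const_left _ 1 hatTop
    simpa [div_eq_mul_inv] using this.inv_tendsto_atTop.const_mul (-(2 * α))
  have hH : IntegrableOn (fun r : ℝ => 2 * α ^ 2 * r ^ (α - 1) / (1 + r ^ α) ^ 2)
      (Ioi 0) volume :=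
    integrableOn_Ioi_deriv_of_nonneg hcontH hderivH
      (fun x hx => by
        have := Real.rpow_pos_of_pos (show (0:ℝ) < x from hx) (α - 1)
        have := hpos x hx
        positivity) hHtop
  -- measurability of f
  have hm : Measurable f := by
    rw [hfdef]; fun_prop
  -- the radial integrand is dominated by hH's integrand
  have hint : IntegrableOn (fun y : ℝ => y * f y) (Ioi 0) volume := by
    refine hH.mono' ((measurable_id.mul hm).aestronglyMeasurable) ?_
    filter_upwards [ae_restrict_mem measurableSet_Ioi] with r hr
    have hr' : (0:ℝ) < r := hr
    have hrα : 0 < r ^ α := Real.rpow_pos_of_pos hr' α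
    have h1r : 0 < 1 + r ^ α := hpos r hr'
    have e3 : r ^ (α - 1) = r ^ (α - 2) * r := by
      rw [show α - 1 = (α - 2) + 1 by ring, Real.rpow_add hr', Real.rpow_one]
    have hfr : r * f r =
        (2 * α ^ 2 * r ^ (α - 1) / (1 + r ^ α) ^ 2) * ((1 - r ^ α) / (1 + r ^ α)) := by
      rw [hfdef, e3]; ring
    rw [Real.norm_eq_abs, hfr, abs_mul]
    have hfac : 0 ≤ 2 * α ^ 2 * r ^ (α - 1) / (1 + r ^ α) ^ 2 := by positivity
    rw [abs_of_nonneg hfac]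
    have habs : |(1 - r ^ α) / (1 + r ^ α)| ≤ 1 := by
      rw [abs_div, abs_of_pos h1r, div_le_one h1r]
      rw [abs_le]; constructor <;> nlinarith
    calc 2 * α ^ 2 * r ^ (α - 1) / (1 + r ^ α) ^ 2 * |(1 - r ^ α) / (1 + r ^ α)|
        ≤ 2 * α ^ 2 * r ^ (α - 1) / (1 + r ^ α) ^ 2 * 1 :=
          mul_le_mul_of_nonneg_left habs hfac
      _ = 2 * α ^ 2 * r ^ (α - 1) / (1 + r ^ α) ^ 2 := mul_one _
  -- integral of the radial integrand vanishes
  have hI0 : ∫ y in Ioi (0:ℝ), y * f y = 0 := by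
    have h := integral_Ioi_of_hasDerivAt_of_tendsto hcontG hderivG hint hGtop
    simpa [Real.zero_rpow hα.ne'] using h
  have hPlane : Integrable (fun y : Plane => f ‖y‖) (volume : Measure Plane) :=
    radial_integrable hm hint
  constructor
  · rw [hfun]; exact hPlane
  · rw [hfun]
    rw [integral_fun_norm_addHaar (volume : Measure Plane) f]
    have hdim : Module.finrank ℝ Plane = 2 := finrank_euclideanSpace_fin
    rw [hdim]
    have h2 : ∫ y in Ioi (0:ℝ), y ^ (2 - 1) • f y = 0 := by simpa using hI0
    rw [h2]
    simp
end
end
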